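/- Let M1 = [[1,0,0,0],[0,1,0,1],[0,0,1,0],[0,0,0,1]] and τ = [[τ0,1,0,0],[1,0,0,0],[τ1,τ3,1,0],[τ2,-τ0τ3+τ1,-τ0,1]] with τ2+1 ≠ 0 and τ0²τ3 - τ0τ1 + τ2 + 1 ≠ 0. Then M1·τ = τ'·g, where τ' is the normalized matrix with parameters τ0' = τ0/(τ2+1), τ1' = τ1/(τ2+1), τ2' = τ2/(τ2+1), τ3' = (τ0τ1τ3 - τ1² + τ2τ3 + τ3)/(τ0²τ3 - τ0τ1 + τ2 + 1), and g is the upper triangular matrix [[τ2+1, -τ0τ3+τ1, -τ0, 1],[0, (τ0²τ3-τ0τ1+τ2+1)/(τ2+1), τ0²/(τ2+1), -τ0/(τ2+1)],[0,0,(τ2+1)/(τ0²τ3-τ0τ1+τ2+1), (τ0τ3-τ1)/(τ0²τ3-τ0τ1+τ2+1)],[0,0,0,1/(τ2+1)]]. -/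

import Mathlib

open Matrix

def M1 : Matrix (Fin 4) (Fin 4) ℂ :=
  !![1,0,0,0; 0,1,0,1; 0,0,1,0; 0,0,0,1]

/-- The normalized form of a period matrix with parameters (a,b,c,d). -/
def N (a b c d : ℂ) : Matrix (Fin 4) (Fin 4) ℂ :=
  !![a, 1, 0, 0;
     1, 0, 0, 0;
     b, d, 1, 0;
     c, -a*d+b, -a, 1]

set_option maxHeartbeats 2000000 in
theorem stmt12 (τ0 τ1 τ2 τ3 : ℂ) (h1 : τ2 + 1 ≠ 0)
    (h2 : τ0^2*τ3 - τ0*τ1 + τ2 + 1 ≠ 0) :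
    M1 * N τ0 τ1 τ2 τ3 =
      N (τ0/(τ2+1)) (τ1/(τ2+1)) (τ2/(τ2+1))
        ((τ0*τ1*τ3 - τ1^2 + τ2*τ3 + τ3)/(τ0^2*τ3 - τ0*τ1 + τ2 + 1)) *
      !![τ2+1, -τ0*τ3+τ1, -τ0, 1;
         0, (τ0^2*τ3-τ0*τ1+τ2+1)/(τ2+1), τ0^2/(τ2+1), -τ0/(τ2+1);
         0, 0, (τ2+1)/(τ0^2*τ3-τ0*τ1+τ2+1), (τ0*τ3-τ1)/(τ0^2*τ3-τ0*τ1+τ2+1);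
         0, 0, 0, 1/(τ2+1)] := by
  set A : ℂ := τ2 + 1 with hA
  set B : ℂ := τ0^2*τ3 - τ0*τ1 + τ2 + 1 with hB
  set num : ℂ := τ0*τ1*τ3 - τ1^2 + τ2*τ3 + τ3 with hnum
  have hAB : A * B ≠ 0 := mul_ne_zero h1 h2
  have hP : N (τ0/A) (τ1/A) (τ2/A) (num/B) =
      (A*B)⁻¹ • !![τ0*B, A*B, 0, 0;
                   A*B, 0, 0, 0;
                   τ1*B, num*A, A*B, 0;
                   τ2*B, -(τ0*num) + τ1*B, -(τ0*B), A*B] := by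
    unfold N
    ext i j
    fin_cases i <;> fin_cases j <;>
      · simp only [Matrix.smul_apply, Matrix.cons_val', Matrix.cons_val_zero,
          Matrix.cons_val_one, Matrix.head_cons, Matrix.empty_val', Matrix.cons_val_fin_one,
          Matrix.head_fin_const, Matrix.of_apply, Matrix.cons_val_two, Matrix.tail_cons,
          Matrix.cons_val_three, smul_eq_mul, Fin.zero_eta, Fin.mk_one, Fin.reduceFinMk, Matrix.cons_val]
        field_simp
        try ring
  have hQ : (!![A, -τ0*τ3+τ1, -τ0, 1;
         0, B/A, τ0^2/A, -τ0/A;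
         0, 0, A/B, (τ0*τ3-τ1)/B;
         0, 0, 0, 1/A] : Matrix (Fin 4) (Fin 4) ℂ) =
      (A*B)⁻¹ • !![A^2*B, (-τ0*τ3+τ1)*(A*B), -τ0*(A*B), A*B;
                   0, B^2, τ0^2*B, -τ0*B;
                   0, 0, A^2, (τ0*τ3-τ1)*A;
                   0, 0, 0, B] := by
    ext i j
    fin_cases i <;> fin_cases j <;>
      · simp only [Matrix.smul_apply, Matrix.cons_val', Matrix.cons_val_zero,
          Matrix.cons_val_one, Matrix.head_cons, Matrix.empty_val', Matrix.cons_val_fin_one,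
          Matrix.head_fin_const, Matrix.of_apply, Matrix.cons_val_two, Matrix.tail_cons,
          Matrix.cons_val_three, smul_eq_mul, Fin.zero_eta, Fin.mk_one, Fin.reduceFinMk, Matrix.cons_val]
        field_simp
        try ring
  rw [hP, hQ, Matrix.smul_mul, Matrix.mul_smul, smul_smul, ← mul_inv,
    eq_inv_smul_iff₀ (mul_ne_zero hAB hAB)]
  rw [hA, hB, hnum]
  unfold M1 N
  ext i j
  fin_cases i <;> fin_cases j <;>
    · simp [Matrix.mul_apply, Fin.sum_univ_four, Matrix.smul_apply, smul_eq_mul, Matrix.vecHead, Matrix.vecTail, Function.comp]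
      try ring
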